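/- A finite normal functor F : CohI^n → CohI has only finitely many uniform families of cliques. -/

import Mathlib

open CategoryTheory Limits

/-- A coherence space: a web together with a reflexive symmetric coherence relation. -/
structure CohSpace : Type 1 where
  web : Type
  coh : web → web → Prop
  refl : ∀ x, coh x x
  symm : ∀ {x y}, coh x y → coh y x

/-- An embedding of coherence spaces: an injection preserving and reflecting coherence. -/
@[ext]
structure CohEmb (X Y : CohSpace) : Type where
  toFun : X.web → Y.web
  inj : Function.Injective toFun
  coh_iff : ∀ x x', X.coh x x' ↔ Y.coh (toFun x) (toFun x')

/-- The category `CohI` of coherence spaces and embeddings. -/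
instance : Category CohSpace where
  Hom := CohEmb
  id X := ⟨id, fun _ _ h => h, fun _ _ => Iff.rfl⟩
  comp f g := ⟨g.toFun ∘ f.toFun, g.inj.comp f.inj,
    fun x x' => (f.coh_iff x x').trans (g.coh_iff _ _)⟩
  id_comp _ := rfl
  comp_id _ := rfl
  assoc _ _ _ := rfl

/-- A clique: a set of pairwise coherent points. -/
def CohSpace.IsClique (X : CohSpace) (c : Set X.web) : Prop :=
  ∀ ⦃x⦄, x ∈ c → ∀ ⦃y⦄, y ∈ c → X.coh x y

/-- Linear negation (dual) of a coherence space. -/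
def CohSpace.dual (X : CohSpace) : CohSpace where
  web := X.web
  coh x y := x = y ∨ ¬ X.coh x y
  refl _ := Or.inl rfl
  symm h := h.elim (fun h' => Or.inl h'.symm) (fun h' => Or.inr fun hc => h' (X.symm hc))

/-- Tensor product of coherence spaces. -/
def CohSpace.tens (X Y : CohSpace) : CohSpace where
  web := X.web × Y.web
  coh p q := X.coh p.1 q.1 ∧ Y.coh p.2 q.2
  refl p := ⟨X.refl p.1, Y.refl p.2⟩
  symm h := ⟨X.symm h.1, Y.symm h.2⟩

/-- Direct sum (`⊕`) of coherence spaces. -/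
def CohSpace.sum (X Y : CohSpace) : CohSpace where
  web := X.web ⊕ Y.web
  coh := Sum.LiftRel X.coh Y.coh
  refl x := by cases x with
    | inl a => exact Sum.LiftRel.inl (X.refl a)
    | inr b => exact Sum.LiftRel.inr (Y.refl b)
  symm h := by cases h with
    | inl h => exact Sum.LiftRel.inl (X.symm h)
    | inr h => exact Sum.LiftRel.inr (Y.symm h)

/-- Linear implication `X ⊸ Y := (X ⊗ Y^⊥)^⊥`. -/
def CohSpace.lolly (X Y : CohSpace) : CohSpace := (X.tens Y.dual).dual

/-- The with connective `X & Y := (X^⊥ ⊕ Y^⊥)^⊥`. -/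
def CohSpace.withc (X Y : CohSpace) : CohSpace := (X.dual.sum Y.dual).dual

/-- The one-point coherence space (interpretation of `1` and `⊥`). -/
def oneCoh : CohSpace where
  web := PUnit
  coh _ _ := True
  refl _ := trivial
  symm _ := trivial

/-- The empty coherence space (interpretation of `0` and `⊤`). -/
def topCoh : CohSpace where
  web := Empty
  coh x _ := x.elim
  refl x := x.elim
  symm {x} _ := x.elim

/-- The induced embedding between duals. -/
def CohEmb.dualMap {X Y : CohSpace} (f : X ⟶ Y) : X.dual ⟶ Y.dual where
  toFun := f.toFun
  inj := f.inj
  coh_iff x x' := by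
    constructor
    · rintro (rfl | h)
      · exact Or.inl rfl
      · exact Or.inr fun hc => h ((f.coh_iff _ _).2 hc)
    · rintro (h | h)
      · exact Or.inl (f.inj h)
      · exact Or.inr fun hc => h ((f.coh_iff _ _).1 hc)

/-- The induced embedding between tensor products. -/
def CohEmb.tensMap {X X' Y Y' : CohSpace} (f : X ⟶ X') (g : Y ⟶ Y') :
    X.tens Y ⟶ X'.tens Y' where
  toFun := Prod.map f.toFun g.toFun
  inj := f.inj.prodMap g.inj
  coh_iff p q := and_congr (f.coh_iff _ _) (g.coh_iff _ _)

/-- The induced embedding between direct sums. -/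
def CohEmb.sumMap {X X' Y Y' : CohSpace} (f : X ⟶ X') (g : Y ⟶ Y') :
    X.sum Y ⟶ X'.sum Y' where
  toFun := Sum.map f.toFun g.toFun
  inj := f.inj.sumMap g.inj
  coh_iff x x' := by
    constructor
    · intro h
      cases h with
      | inl h => exact Sum.LiftRel.inl ((f.coh_iff _ _).1 h)
      | inr h => exact Sum.LiftRel.inr ((g.coh_iff _ _).1 h)
    · intro h
      cases x with
      | inl a => cases x' with
        | inl a' => exact Sum.LiftRel.inl ((f.coh_iff _ _).2 (by cases h; assumption))
        | inr b' => exact absurd h (by intro hh; cases hh)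
      | inr b => cases x' with
        | inl a' => exact absurd h (by intro hh; cases hh)
        | inr b' => exact Sum.LiftRel.inr ((g.coh_iff _ _).2 (by cases h; assumption))

/-- Linear negation as a covariant endofunctor of `CohI`. -/
def dualFunctor : CohSpace ⥤ CohSpace where
  obj := CohSpace.dual
  map := CohEmb.dualMap
  map_id _ := rfl
  map_comp _ _ := rfl

/-- Tensor as a functor on the product category. -/
def tensorFunctor : CohSpace × CohSpace ⥤ CohSpace where
  obj p := p.1.tens p.2
  map f := CohEmb.tensMap f.1 f.2
  map_id _ := rfl
  map_comp _ _ := rfl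

/-- Sum as a functor on the product category. -/
def sumFunctor : CohSpace × CohSpace ⥤ CohSpace where
  obj p := p.1.sum p.2
  map f := CohEmb.sumMap f.1 f.2
  map_id p := by
    apply CohEmb.ext
    funext x
    cases x <;> rfl
  map_comp f g := by
    apply CohEmb.ext
    funext x
    cases x <;> rfl

/-- The category `CohI^n`. -/
abbrev CohTuple (n : ℕ) := Fin n → CohSpace

/-- A normal functor: one preserving filtered colimits and finite pullbacks. -/
def IsNormalFunctor {C : Type*} {D : Type*} [Category C] [Category D] (F : C ⥤ D) : Prop :=
  PreservesFilteredColimits F ∧ PreservesLimitsOfShape WalkingCospan F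

/-- The web functor `CohI ⥤ Set`. -/
def webF : CohSpace ⥤ Type where
  obj X := X.web
  map f := TypeCat.ofHom f.toFun
  map_id _ := rfl
  map_comp _ _ := rfl

/-- The category of elements of the web presheaf `|F|` of `F : CohI^n ⥤ CohI`. -/
abbrev Elts {n : ℕ} (F : CohTuple n ⥤ CohSpace) := (F ⋙ webF).Elements

/-- `(X⃗, x)` is a normal form of `F`: its webs are finite and it is initial in its own
slice category of `El(|F|)`. -/
def IsNormalForm {n : ℕ} {F : CohTuple n ⥤ CohSpace} (e : Elts F) : Prop :=
  (∀ i, Finite (e.1 i).web) ∧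
    ∀ (f : Elts F) (u : f ⟶ e), ∃! v : e ⟶ f, v ≫ u = 𝟙 e

/-- The pointwise dual functor `F^⊥`. -/
def dualF {n : ℕ} (F : CohTuple n ⥤ CohSpace) : CohTuple n ⥤ CohSpace := F ⋙ dualFunctor

/-- The pointwise tensor functor `F ⊗ G`. -/
def tensF {n : ℕ} (F G : CohTuple n ⥤ CohSpace) : CohTuple n ⥤ CohSpace :=
  F.prod' G ⋙ tensorFunctor

/-- The pointwise sum functor `F ⊕ G`. -/
def sumF {n : ℕ} (F G : CohTuple n ⥤ CohSpace) : CohTuple n ⥤ CohSpace :=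
  F.prod' G ⋙ sumFunctor

/-- The pointwise linear implication functor `F ⊸ G`. -/
def lollyF {n : ℕ} (F G : CohTuple n ⥤ CohSpace) : CohTuple n ⥤ CohSpace :=
  dualF (tensF F (dualF G))

/-- The degree of a normal functor: the supremum of the cardinalities of the webs
occurring in its normal forms. -/
noncomputable def degree {n : ℕ} (F : CohTuple n ⥤ CohSpace) : ℕ∞ :=
  ⨆ (e : Elts F) (_ : IsNormalForm e) (i : Fin n), (Nat.card (e.1 i).web : ℕ∞)

/-- `F` sends coherence spaces with finite webs to coherence spaces with finite webs. -/
def PreservesFiniteWebs {n : ℕ} (F : CohTuple n ⥤ CohSpace) : Prop :=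
  ∀ X : CohTuple n, (∀ i, Finite (X i).web) → Finite (F.obj X).web

/-- A finite normal functor: one preserving finiteness of webs and of finite degree. -/
def IsFiniteFunctor {n : ℕ} (F : CohTuple n ⥤ CohSpace) : Prop :=
  PreservesFiniteWebs F ∧ degree F < ⊤

/-- `NF(F)`: the set of isomorphism classes of normal forms of `F`. -/
def NFSet {n : ℕ} (F : CohTuple n ⥤ CohSpace) :
    Set (Quotient (isIsomorphicSetoid (Elts F))) :=
  { q | ∃ e : Elts F, IsNormalForm e ∧ Quotient.mk _ e = q }

/-- A uniform family of cliques of `F : CohI^n ⥤ CohI`. -/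
def IsUniformFamily {n : ℕ} (F : CohTuple n ⥤ CohSpace)
    (c : ∀ X : CohTuple n, Set (F.obj X).web) : Prop :=
  (∀ X, (F.obj X).IsClique (c X)) ∧
    ∀ (X Y : CohTuple n) (ι : X ⟶ Y), c X = (F.map ι).toFun ⁻¹' c Y

/-- Coherence of two normal forms: all their instantiations along embeddings into a
common tuple are coherent. -/
def NFCoherent {n : ℕ} {F : CohTuple n ⥤ CohSpace} (e e' : Elts F) : Prop :=
  ∀ (Z : CohTuple n) (ι : e.1 ⟶ Z) (κ : e'.1 ⟶ Z),
    (F.obj Z).coh ((F.map ι).toFun e.2) ((F.map κ).toFun e'.2)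

/-- A coherence space structure on a canonical finite web `Fin k`. -/
structure FinCohData where
  k : ℕ
  r : Fin k → Fin k → Prop
  refl : ∀ i, r i i
  symm : ∀ {i j}, r i j → r j i

/-- The coherence space associated to a `FinCohData`. -/
def FinCohData.toCoh (d : FinCohData) : CohSpace where
  web := Fin d.k
  coh := d.r
  refl := d.refl
  symm := d.symm

/-- A canonical tuple of finite coherence spaces. -/
def canonTuple {n : ℕ} (d : Fin n → FinCohData) : CohTuple n := fun i => (d i).toCoh

/-- Self-coherent normal forms of `F` carried by canonical tuples of finite coherence
spaces; the web of the trace is the set of their isomorphism classes. -/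
def CanonNF {n : ℕ} (F : CohTuple n ⥤ CohSpace) : Type :=
  Σ d : Fin n → FinCohData,
    { x : (F.obj (canonTuple d)).web //
        IsNormalForm (F := F) ⟨canonTuple d, x⟩ ∧
          NFCoherent (F := F) ⟨canonTuple d, x⟩ ⟨canonTuple d, x⟩ }

/-- The element of `El(|F|)` carried by a canonical normal form. -/
def CanonNF.toElts {n : ℕ} {F : CohTuple n ⥤ CohSpace} (c : CanonNF F) : Elts F :=
  ⟨canonTuple c.1, c.2.1⟩

/-- Canonical normal forms are identified when isomorphic in `El(|F|)`. -/
def traceSetoid {n : ℕ} (F : CohTuple n ⥤ CohSpace) : Setoid (CanonNF F) :=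
  (isIsomorphicSetoid (Elts F)).comap CanonNF.toElts

/-- The trace `Tr(F)`: isomorphism classes of self-coherent normal forms, with the
coherence relation between normal forms. -/
def Tr {n : ℕ} (F : CohTuple n ⥤ CohSpace) : CohSpace where
  web := Quotient (traceSetoid F)
  coh q q' := ∃ c c' : CanonNF F,
    Quotient.mk (traceSetoid F) c = q ∧ Quotient.mk (traceSetoid F) c' = q' ∧
      NFCoherent c.toElts c'.toElts
  refl q := by
    obtain ⟨c, rfl⟩ := Quotient.exists_rep q
    exact ⟨c, c, rfl, rfl, c.2.2.2⟩
  symm h := by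
    obtain ⟨c, c', h1, h2, h3⟩ := h
    exact ⟨c', c, h2, h1, fun Z ι κ => (F.obj Z).symm (h3 Z κ ι)⟩

/-- The family of functors whose pointwise pairing computes `Z ↦ (X₁,…,Xₙ,Z)`. -/
def gfam {n : ℕ} (X : CohTuple n) (i : Fin (n + 1)) : CohTuple 1 ⥤ CohSpace :=
  if h : (i : ℕ) < n then (Functor.const (CohTuple 1)).obj (X ⟨i, h⟩)
  else Pi.eval (fun _ : Fin 1 => CohSpace) 0

/-- The partial application `F(X₁,…,Xₙ,−)` of `F : CohI^(n+1) ⥤ CohI`. -/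
def partialApp {n : ℕ} (F : CohTuple (n + 1) ⥤ CohSpace) (X : CohTuple n) :
    CohTuple 1 ⥤ CohSpace :=
  Functor.pi' (gfam X) ⋙ F

/-- The embedding `(X⃗, Z) ↪ (Y⃗, Z)` induced componentwise by `ι : X⃗ ↪ Y⃗`. -/
def extHom {n : ℕ} {X Y : CohTuple n} (ι : X ⟶ Y) (Z : CohTuple 1) (i : Fin (n + 1)) :
    (gfam X i).obj Z ⟶ (gfam Y i).obj Z := by
  by_cases h : (i : ℕ) < n
  · simp only [gfam, dif_pos h]
    exact ι ⟨i, h⟩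
  · simp only [gfam, dif_neg h]
    exact 𝟙 (Z 0)

/-- The embedding `extHom` as a morphism in `CohI^(n+1)`. -/
def extHomPi {n : ℕ} {X Y : CohTuple n} (ι : X ⟶ Y) (Z : CohTuple 1) :
    (Functor.pi' (gfam X)).obj Z ⟶ (Functor.pi' (gfam Y)).obj Z :=
  fun i => extHom ι Z i

/-- Transport along an object equality `G.obj X = Tr (partialApp F X)`. -/
def trWebCast {n : ℕ} {F : CohTuple (n + 1) ⥤ CohSpace} {G : CohTuple n ⥤ CohSpace}
    (h : ∀ X, G.obj X = Tr (partialApp F X)) (X : CohTuple n) :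
    (Tr (partialApp F X)).web → (G.obj X).web :=
  fun q => cast (congrArg CohSpace.web (h X)).symm q

/-- `G` acts on embeddings the way `∀(F)` does: normal forms are transported by
keeping the bound variables and substituting along `ι` on the free ones. -/
def ForallAction {n : ℕ} (F : CohTuple (n + 1) ⥤ CohSpace) (G : CohTuple n ⥤ CohSpace)
    (hobj : ∀ X, G.obj X = Tr (partialApp F X)) : Prop :=
  ∀ (X Y : CohTuple n) (ι : X ⟶ Y) (c : CanonNF (partialApp F X)),
    ∃ c' : CanonNF (partialApp F Y),
      (G.map ι).toFun (trWebCast hobj X (Quotient.mk (traceSetoid _) c))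
          = trWebCast hobj Y (Quotient.mk (traceSetoid _) c') ∧
        c'.1 = c.1 ∧
        HEq c'.2.1 ((F.map (extHomPi ι (canonTuple c.1))).toFun c.2.1)

/-- `G` is (a presentation of) the functor `∀(F)`. -/
def IsForallExtension {n : ℕ} (F : CohTuple (n + 1) ⥤ CohSpace)
    (G : CohTuple n ⥤ CohSpace) : Prop :=
  ∃ hobj : ∀ X, G.obj X = Tr (partialApp F X), ForallAction F G hobj

/-- The uniform family of cliques obtained by instantiating a clique of the trace. -/
def instFam {n : ℕ} (F : CohTuple n ⥤ CohSpace) (c : Set (Tr F).web) :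
    ∀ X : CohTuple n, Set (F.obj X).web := fun X =>
  { x | ∃ (d : CanonNF F) (ι : canonTuple d.1 ⟶ X),
      Quotient.mk (traceSetoid F) d ∈ c ∧ (F.map ι).toFun d.2.1 = x }


/-! ### Auxiliary material for the proof of `stmt9` -/

section Stmt9Aux

open CategoryTheory Limits

/-- Inverse of a bijective embedding. -/
noncomputable def cohInv {A B : CohSpace} (f : A ⟶ B) (hf : Function.Bijective f.toFun) :
    B ⟶ A where
  toFun := (Equiv.ofBijective f.toFun hf).symm
  inj := (Equiv.ofBijective f.toFun hf).symm.injective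
  coh_iff x x' := by
    have h := f.coh_iff ((Equiv.ofBijective f.toFun hf).symm x)
      ((Equiv.ofBijective f.toFun hf).symm x')
    rw [show f.toFun ((Equiv.ofBijective f.toFun hf).symm x) = x from
          (Equiv.ofBijective f.toFun hf).apply_symm_apply x,
        show f.toFun ((Equiv.ofBijective f.toFun hf).symm x') = x' from
          (Equiv.ofBijective f.toFun hf).apply_symm_apply x'] at h
    exact h.symm

lemma cohInv_comp {A B : CohSpace} (f : A ⟶ B) (hf : Function.Bijective f.toFun) :
    f ≫ cohInv f hf = 𝟙 A := by
  apply CohEmb.ext; funext a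
  exact (Equiv.ofBijective f.toFun hf).symm_apply_apply a

lemma comp_cohInv {A B : CohSpace} (f : A ⟶ B) (hf : Function.Bijective f.toFun) :
    cohInv f hf ≫ f = 𝟙 B := by
  apply CohEmb.ext; funext b
  exact (Equiv.ofBijective f.toFun hf).apply_symm_apply b

/-- Every element with finite webs has a normal form mapping to it. -/
lemma exists_nf {n : ℕ} {F : CohTuple n ⥤ CohSpace} (e : Elts F)
    (he : ∀ i, Finite (e.1 i).web) :
    ∃ (f : Elts F) (_ : f ⟶ e), IsNormalForm f := by
  classical
  let P : ℕ → Prop := fun N => ∃ (f : Elts F) (_ : f ⟶ e),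
      (∀ i, Finite (f.1 i).web) ∧ (∑ i, Nat.card (f.1 i).web) = N
  have hP : ∃ N, P N := ⟨_, e, 𝟙 e, he, rfl⟩
  obtain ⟨f, u, hfin, hcard⟩ := Nat.find_spec hP
  refine ⟨f, u, hfin, ?_⟩
  intro g w
  haveI hg : ∀ i, Finite (g.1 i).web := fun i => by
    haveI := hfin i
    exact Finite.of_injective _ ((w.1 i).inj)
  have hge : Nat.find hP ≤ ∑ i, Nat.card (g.1 i).web :=
    Nat.find_min' hP ⟨g, w ≫ u, hg, rfl⟩
  have hle : ∀ i, Nat.card (g.1 i).web ≤ Nat.card (f.1 i).web := fun i => by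
    haveI := hfin i
    exact Nat.card_le_card_of_injective _ (w.1 i).inj
  have heqcard : ∀ i, Nat.card (g.1 i).web = Nat.card (f.1 i).web := by
    intro i
    by_contra hne
    have hlt : Nat.card (g.1 i).web < Nat.card (f.1 i).web := lt_of_le_of_ne (hle i) hne
    have hsumlt : (∑ j, Nat.card (g.1 j).web) < ∑ j, Nat.card (f.1 j).web :=
      Finset.sum_lt_sum (fun j _ => hle j) ⟨i, Finset.mem_univ i, hlt⟩
    omega
  have hbij : ∀ i, Function.Bijective (w.1 i).toFun := fun i => by
    haveI := hfin i
    exact (Nat.bijective_iff_injective_and_card _).2 ⟨(w.1 i).inj, heqcard i⟩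
  let v1 : f.1 ⟶ g.1 := fun i => cohInv (w.1 i) (hbij i)
  have hv1w : v1 ≫ w.1 = 𝟙 f.1 := funext fun i => comp_cohInv (w.1 i) (hbij i)
  have hel : (F.map v1).toFun f.2 = g.2 := by
    apply (F.map w.1).inj
    have h1 : (F.map w.1).toFun ((F.map v1).toFun f.2) = (F.map (v1 ≫ w.1)).toFun f.2 := by
      rw [F.map_comp]; rfl
    rw [h1, hv1w, F.map_id]
    exact w.2.symm
  refine ⟨⟨v1, hel⟩, Subtype.ext hv1w, ?_⟩
  intro v' hv'
  apply Subtype.ext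
  have h1 : v'.1 ≫ w.1 = 𝟙 f.1 := congrArg Subtype.val hv'
  funext i
  apply CohEmb.ext; funext a
  have h2 : (w.1 i).toFun ((v'.1 i).toFun a) = a :=
    congrArg (fun (q : f.1 ⟶ f.1) => (q i).toFun a) h1
  have h3 : (w.1 i).toFun ((v1 i).toFun a) = a :=
    congrArg (fun (q : f.1 ⟶ f.1) => (q i).toFun a) hv1w
  exact (w.1 i).inj (h2.trans h3.symm)

lemma nf_card_le {n : ℕ} {F : CohTuple n ⥤ CohSpace} {D : ℕ} (hD : degree F ≤ (D : ℕ∞))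
    {e : Elts F} (he : IsNormalForm e) (i : Fin n) : Nat.card (e.1 i).web ≤ D := by
  have h1 : (Nat.card (e.1 i).web : ℕ∞) ≤ degree F :=
    le_iSup_of_le e (le_iSup_of_le he (le_iSup_of_le i le_rfl))
  exact_mod_cast h1.trans hD

/-- The directed poset of finite sub-tuples of webs. -/
def FinSub {n : ℕ} (X : CohTuple n) : Type := { s : ∀ i, Set (X i).web // ∀ i, (s i).Finite }

instance {n : ℕ} (X : CohTuple n) : SemilatticeSup (FinSub X) where
  le s t := ∀ i, s.1 i ⊆ t.1 i
  le_refl s i := le_refl _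
  le_trans a b c hab hbc i := (hab i).trans (hbc i)
  le_antisymm a b hab hba := Subtype.ext (funext fun i => le_antisymm (hab i) (hba i))
  sup s t := ⟨fun i => s.1 i ∪ t.1 i, fun i => (s.2 i).union (t.2 i)⟩
  le_sup_left s t i := Set.subset_union_left
  le_sup_right s t i := Set.subset_union_right
  sup_le a b c hac hbc i := Set.union_subset (hac i) (hbc i)

instance {n : ℕ} (X : CohTuple n) : Nonempty (FinSub X) :=
  ⟨⟨fun _ => ∅, fun _ => Set.finite_empty⟩⟩

/-- The sub-tuple carried by a finite family of subsets. -/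
def subObj {n : ℕ} (X : CohTuple n) (s : FinSub X) : CohTuple n := fun i =>
  { web := ↥(s.1 i)
    coh := fun a b => (X i).coh a.1 b.1
    refl := fun a => (X i).refl a.1
    symm := fun h => (X i).symm h }

/-- The filtered diagram of finite sub-tuples of `X`. -/
def subDiag {n : ℕ} (X : CohTuple n) : FinSub X ⥤ CohTuple n where
  obj := subObj X
  map {s t} f := fun i =>
    { toFun := Set.inclusion (leOfHom f i)
      inj := Set.inclusion_injective _
      coh_iff := fun a b => Iff.rfl }
  map_id s := rfl
  map_comp f g := rfl

/-- The cocone over `subDiag X` with apex `X`. -/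
def subCocone {n : ℕ} (X : CohTuple n) : Cocone (subDiag X) where
  pt := X
  ι :=
    { app := fun s => fun i =>
        { toFun := Subtype.val
          inj := Subtype.val_injective
          coh_iff := fun a b => Iff.rfl }
      naturality := fun s t f => rfl }

/-- The finite sub-tuple generated by a single point. -/
def singleSub {n : ℕ} (X : CohTuple n) (i : Fin n) (x : (X i).web) : FinSub X :=
  ⟨fun j => {y | ∃ _ : i = j, HEq y x}, fun j => Set.Subsingleton.finite (by
      rintro y ⟨rfl, hy⟩ z ⟨-, hz⟩
      exact eq_of_heq (hy.trans hz.symm))⟩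

lemma mem_singleSub {n : ℕ} (X : CohTuple n) (i : Fin n) (x : (X i).web) :
    x ∈ (singleSub X i x).1 i := ⟨rfl, HEq.rfl⟩

lemma app_wd {n : ℕ} {X : CohTuple n} (c : Cocone (subDiag X)) {s t : FinSub X}
    (i : Fin n) (x : (X i).web) (hs : x ∈ s.1 i) (ht : x ∈ t.1 i) :
    ((c.ι.app s) i).toFun ⟨x, hs⟩ = ((c.ι.app t) i).toFun ⟨x, ht⟩ := by
  have key : ∀ (u : FinSub X) (hu : u ≤ s ⊔ t) (hx : x ∈ u.1 i),
      ((c.ι.app u) i).toFun ⟨x, hx⟩ = ((c.ι.app (s ⊔ t)) i).toFun ⟨x, hu i hx⟩ := by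
    intro u hu hx
    have hnat := c.ι.naturality (homOfLE hu)
    have h2 := congrFun (congrArg CohEmb.toFun (congrFun hnat i)) (⟨x, hx⟩ : (subObj X u i).web)
    exact h2.symm
  exact (key s le_sup_left hs).trans (key t le_sup_right ht).symm

/-- `X` is the colimit of its finite sub-tuples. -/
noncomputable def subIsColimit {n : ℕ} (X : CohTuple n) : IsColimit (subCocone X) where
  desc c := fun i =>
    { toFun := fun x => ((c.ι.app (singleSub X i x)) i).toFun ⟨x, mem_singleSub X i x⟩
      inj := by
        intro x y hxy
        have memx : x ∈ (singleSub X i x ⊔ singleSub X i y).1 i :=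
          Set.mem_union_left _ (mem_singleSub X i x)
        have memy : y ∈ (singleSub X i x ⊔ singleSub X i y).1 i :=
          Set.mem_union_right _ (mem_singleSub X i y)
        have hxy' : ((c.ι.app (singleSub X i x)) i).toFun ⟨x, mem_singleSub X i x⟩
            = ((c.ι.app (singleSub X i y)) i).toFun ⟨y, mem_singleSub X i y⟩ := hxy
        rw [app_wd c i x (mem_singleSub X i x) memx,
            app_wd c i y (mem_singleSub X i y) memy] at hxy'
        exact congrArg Subtype.val (((c.ι.app (singleSub X i x ⊔ singleSub X i y)) i).inj hxy')
      coh_iff := by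
        intro x y
        have memx : x ∈ (singleSub X i x ⊔ singleSub X i y).1 i :=
          Set.mem_union_left _ (mem_singleSub X i x)
        have memy : y ∈ (singleSub X i x ⊔ singleSub X i y).1 i :=
          Set.mem_union_right _ (mem_singleSub X i y)
        show (X i).coh x y ↔ (c.pt i).coh
            (((c.ι.app (singleSub X i x)) i).toFun ⟨x, mem_singleSub X i x⟩)
            (((c.ι.app (singleSub X i y)) i).toFun ⟨y, mem_singleSub X i y⟩)
        rw [app_wd c i x (mem_singleSub X i x) memx,
            app_wd c i y (mem_singleSub X i y) memy]
        exact ((c.ι.app (singleSub X i x ⊔ singleSub X i y)) i).coh_iff ⟨x, memx⟩ ⟨y, memy⟩ }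
  fac c s := by
    funext i
    apply CohEmb.ext; funext a
    exact app_wd c i a.1 (mem_singleSub X i a.1) a.2
  uniq c m hm := by
    funext i
    apply CohEmb.ext; funext x
    exact congrFun (congrArg CohEmb.toFun (congrFun (hm (singleSub X i x)) i))
      (⟨x, mem_singleSub X i x⟩ : (subObj X (singleSub X i x) i).web)

lemma exists_finite_preimage {n : ℕ} (F : CohTuple n ⥤ CohSpace)
    [PreservesFilteredColimits F] (X : CohTuple n) (x : (F.obj X).web) :
    ∃ (Y : CohTuple n) (m : Y ⟶ X), (∀ i, Finite (Y i).web) ∧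
      ∃ y, (F.map m).toFun y = x := by
  classical
  have hK : IsColimit (F.mapCocone (subCocone X)) := isColimitOfPreserves F (subIsColimit X)
  let S : Set (F.obj X).web :=
    ⋃ s : FinSub X, Set.range (F.map ((subCocone X).ι.app s)).toFun
  let W : CohSpace :=
    { web := ↥S
      coh := fun a b => (F.obj X).coh a.1 b.1
      refl := fun a => (F.obj X).refl a.1
      symm := fun h => (F.obj X).symm h }
  let incl : W ⟶ F.obj X := ⟨Subtype.val, Subtype.val_injective, fun a b => Iff.rfl⟩
  let K' : Cocone (subDiag X ⋙ F) :=
    { pt := W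
      ι :=
        { app := fun s =>
            { toFun := fun a => ⟨(F.map ((subCocone X).ι.app s)).toFun a,
                Set.mem_iUnion.2 ⟨s, ⟨a, rfl⟩⟩⟩
              inj := fun a b hab => (F.map _).inj (congrArg Subtype.val hab)
              coh_iff := fun a b => (F.map _).coh_iff a b }
          naturality := fun s t f => by
            apply CohEmb.ext; funext a; apply Subtype.ext
            exact congrArg (fun (g : (subDiag X ⋙ F).obj s ⟶ F.obj X) => g.toFun a)
              ((F.mapCocone (subCocone X)).ι.naturality f) } }
  have hcomp : hK.desc K' ≫ incl = 𝟙 (F.obj X) := by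
    apply hK.hom_ext
    intro s
    rw [← Category.assoc, hK.fac K' s]
    apply CohEmb.ext; funext a
    rfl
  have hx : x ∈ S := by
    have h1 : ((hK.desc K').toFun x).1 = x :=
      congrArg (fun (g : F.obj X ⟶ F.obj X) => g.toFun x) hcomp
    rw [← h1]
    exact ((hK.desc K').toFun x).2
  obtain ⟨s, y, hy⟩ := Set.mem_iUnion.1 hx
  exact ⟨subObj X s, (subCocone X).ι.app s, fun i => (s.2 i).to_subtype, y, hy⟩

lemma uniform_mem_iff {n : ℕ} {F : CohTuple n ⥤ CohSpace}
    {c : ∀ X : CohTuple n, Set (F.obj X).web} (hc : IsUniformFamily F c)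
    {A B : CohTuple n} (g : A ⟶ B) (a : (F.obj A).web) :
    (F.map g).toFun a ∈ c B ↔ a ∈ c A := by
  rw [hc.2 A B g]
  exact Iff.rfl

lemma uniform_ext {n : ℕ} {F : CohTuple n ⥤ CohSpace} [PreservesFilteredColimits F]
    {D : ℕ} (hD : degree F ≤ (D : ℕ∞))
    {c c' : ∀ X : CohTuple n, Set (F.obj X).web}
    (hc : IsUniformFamily F c) (hc' : IsUniformFamily F c')
    (h : ∀ d : Fin n → FinCohData, (∀ i, (d i).k ≤ D) → c (canonTuple d) = c' (canonTuple d)) :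
    c = c' := by
  classical
  funext X
  ext x
  obtain ⟨Y, m, hYfin, y, hy⟩ := exists_finite_preimage F X x
  obtain ⟨g, u, hnf⟩ := exists_nf (F := F) ⟨Y, y⟩ hYfin
  haveI hgfin := hnf.1
  let φ : ∀ i, (g.1 i).web ≃ Fin (Nat.card (g.1 i).web) := fun i => Finite.equivFin _
  let d : Fin n → FinCohData := fun i =>
    { k := Nat.card (g.1 i).web
      r := fun a b => (g.1 i).coh ((φ i).symm a) ((φ i).symm b)
      refl := fun a => (g.1 i).refl _
      symm := fun hab => (g.1 i).symm hab }
  have hdk : ∀ i, (d i).k ≤ D := fun i => nf_card_le hD hnf i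
  let κ : g.1 ⟶ canonTuple d := fun i =>
    { toFun := φ i
      inj := (φ i).injective
      coh_iff := fun a b => by
        show (g.1 i).coh a b ↔ (d i).r (φ i a) (φ i b)
        simp only [d, Equiv.symm_apply_apply] }
  have step1 : x ∈ c X ↔ y ∈ c Y := by rw [← hy]; exact uniform_mem_iff hc m y
  have step1' : x ∈ c' X ↔ y ∈ c' Y := by rw [← hy]; exact uniform_mem_iff hc' m y
  have step2 : y ∈ c Y ↔ g.2 ∈ c g.1 := by
    rw [show y = (F.map u.1).toFun g.2 from u.2.symm]
    exact uniform_mem_iff hc u.1 g.2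
  have step2' : y ∈ c' Y ↔ g.2 ∈ c' g.1 := by
    rw [show y = (F.map u.1).toFun g.2 from u.2.symm]
    exact uniform_mem_iff hc' u.1 g.2
  have step3 : g.2 ∈ c g.1 ↔ (F.map κ).toFun g.2 ∈ c (canonTuple d) :=
    (uniform_mem_iff hc κ g.2).symm
  have step3' : g.2 ∈ c' g.1 ↔ (F.map κ).toFun g.2 ∈ c' (canonTuple d) :=
    (uniform_mem_iff hc' κ g.2).symm
  have hfinal : (x ∈ c X) ↔ (x ∈ c' X) := by
    rw [step1, step2, step3, h d hdk, ← step3', ← step2', ← step1']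
  exact hfinal

/-- Bounded canonical data form a finite type. -/
lemma finite_bddData (Dn : ℕ) : Finite { d : FinCohData // d.k ≤ Dn } := by
  apply Finite.of_injective
    (fun d => (⟨⟨d.1.k, Nat.lt_succ_of_le d.2⟩, d.1.r⟩ :
      Σ k : Fin (Dn + 1), (Fin k → Fin k → Prop)))
  intro a b hab
  apply Subtype.ext
  have hk : a.1.k = b.1.k := congrArg (fun p => p.1.1) hab
  have hr : HEq a.1.r b.1.r := (Sigma.mk.inj_iff.1 hab).2
  obtain ⟨a, ha⟩ := a
  obtain ⟨b, hb⟩ := b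
  obtain ⟨ka, ra, pa, qa⟩ := a
  obtain ⟨kb, rb, pb, qb⟩ := b
  dsimp at hk hr ⊢
  subst hk
  have hreq : ra = rb := eq_of_heq hr
  subst hreq
  rfl

end Stmt9Aux
-- STATEMENT 9
theorem stmt9 {n : ℕ} (F : CohTuple n ⥤ CohSpace) (hF : IsNormalFunctor F)
    (hfin : IsFiniteFunctor F) :
    { c : ∀ X : CohTuple n, Set (F.obj X).web | IsUniformFamily F c }.Finite := by
  classical
  haveI := hF.1
  obtain ⟨hweb, hdeg⟩ := hfin
  obtain ⟨D, hDeq⟩ := WithTop.ne_top_iff_exists.1 hdeg.ne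
  have hD : degree F ≤ (D : ℕ∞) := le_of_eq hDeq.symm
  haveI hbdd : Finite { d : FinCohData // d.k ≤ D } := finite_bddData D
  haveI : ∀ (e : Fin n → { d : FinCohData // d.k ≤ D }),
      Finite (F.obj (canonTuple (fun i => (e i).1))).web := fun e =>
    hweb _ (fun i => by
      show Finite (Fin ((e i).1).k)
      infer_instance)
  haveI : Finite ↥{ c : ∀ X : CohTuple n, Set (F.obj X).web | IsUniformFamily F c } := by
    apply Finite.of_injective
      (fun c => (fun e : Fin n → { d : FinCohData // d.k ≤ D } =>
        c.1 (canonTuple (fun i => (e i).1))))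
    intro c c' hcc
    apply Subtype.ext
    apply uniform_ext hD c.2 c'.2
    intro d hd
    exact congrFun hcc (fun i => ⟨d i, hd i⟩)
  exact Set.toFinite _
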